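/- Let G be a connected k-uniform hypergraph on {1,…,n} with at least one edge, and let x ∈ ℝ^n be a nonzero real vector satisfying ((D+A) x^{k−1})_i = 0 for all i. Then there exists a nonzero real number γ such that x_i ∈ {γ, −γ} for every i; in particular all components of x are nonzero and have the same absolute value. -/
import Mathlib


open Finset

/-- Degree of vertex `i` in the hypergraph with edge set `E`. -/
def hdeg {n : ℕ} (E : Finset (Finset (Fin n))) (i : Fin n) : ℕ :=
  (E.filter fun e => i ∈ e).card

/-- Laplacian tensor action `((D - A) x^{k-1})_i` over ℂ. -/
noncomputable def lapC (k : ℕ) {n : ℕ} (E : Finset (Finset (Fin n)))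
    (x : Fin n → ℂ) (i : Fin n) : ℂ :=
  (hdeg E i : ℂ) * x i ^ (k - 1) -
    ∑ e ∈ E.filter (fun e => i ∈ e), ∏ j ∈ e.erase i, x j

/-- Signless Laplacian tensor action `((D + A) x^{k-1})_i` over ℂ. -/
noncomputable def slapC (k : ℕ) {n : ℕ} (E : Finset (Finset (Fin n)))
    (x : Fin n → ℂ) (i : Fin n) : ℂ :=
  (hdeg E i : ℂ) * x i ^ (k - 1) +
    ∑ e ∈ E.filter (fun e => i ∈ e), ∏ j ∈ e.erase i, x j

/-- Laplacian tensor action `((D - A) x^{k-1})_i` over ℝ. -/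
noncomputable def lapR (k : ℕ) {n : ℕ} (E : Finset (Finset (Fin n)))
    (x : Fin n → ℝ) (i : Fin n) : ℝ :=
  (hdeg E i : ℝ) * x i ^ (k - 1) -
    ∑ e ∈ E.filter (fun e => i ∈ e), ∏ j ∈ e.erase i, x j

/-- Signless Laplacian tensor action `((D + A) x^{k-1})_i` over ℝ. -/
noncomputable def slapR (k : ℕ) {n : ℕ} (E : Finset (Finset (Fin n)))
    (x : Fin n → ℝ) (i : Fin n) : ℝ :=
  (hdeg E i : ℝ) * x i ^ (k - 1) +
    ∑ e ∈ E.filter (fun e => i ∈ e), ∏ j ∈ e.erase i, x j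

/-- The hypergraph with edge set `E` is connected: every pair of distinct vertices is
joined by a chain of edges with consecutive edges intersecting. -/
def HConnected {n : ℕ} (E : Finset (Finset (Fin n))) : Prop :=
  ∀ i j : Fin n, i ≠ j → ∃ m : ℕ, ∃ es : Fin (m + 1) → Finset (Fin n),
    (∀ r, es r ∈ E) ∧ i ∈ es 0 ∧ j ∈ es (Fin.last m) ∧
    ∀ r : Fin m, (es r.castSucc ∩ es r.succ).Nonempty

theorem stmt_8 {n k : ℕ} (hk : 3 ≤ k) (hn : k ≤ n)
    (E : Finset (Finset (Fin n))) (hE : ∀ e ∈ E, e.card = k)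
    (hconn : HConnected E) (hne : E.Nonempty)
    (x : Fin n → ℝ) (hx : x ≠ 0)
    (heig : ∀ i, slapR k E x i = 0) :
    ∃ γ : ℝ, γ ≠ 0 ∧ ∀ i, x i = γ ∨ x i = -γ := by
  have hn0 : 0 < n := by omega
  obtain ⟨i0, -, hi0⟩ := Finset.exists_max_image Finset.univ (fun i => |x i|)
    ⟨⟨0, hn0⟩, mem_univ _⟩
  set M := |x i0| with hMdef
  have hM : ∀ i, |x i| ≤ M := fun i => hi0 i (mem_univ i)
  have hMpos : 0 < M := by
    obtain ⟨i, hi⟩ := Function.ne_iff.mp hx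
    exact lt_of_lt_of_le (abs_pos.mpr hi) (hM i)
  -- propagation: if v is a max vertex, all vertices in an edge through v are max
  have key : ∀ v : Fin n, |x v| = M → ∀ e ∈ E, v ∈ e → ∀ j ∈ e, |x j| = M := by
    intro v hv e he hve j hj
    rcases eq_or_ne j v with rfl | hjv
    · exact hv
    have heq := heig v
    unfold slapR at heq
    set F := E.filter (fun e => v ∈ e) with hF
    have heF : e ∈ F := mem_filter.mpr ⟨he, hve⟩
    have hcard : ∀ f ∈ F, (f.erase v).card = k - 1 := by
      intro f hf
      rcases mem_filter.mp hf with ⟨hfE, hvf⟩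
      rw [Finset.card_erase_of_mem hvf, hE f hfE]
    have hle : ∀ f ∈ F, ∏ j ∈ f.erase v, |x j| ≤ M ^ (k - 1) := by
      intro f hf
      calc ∏ j ∈ f.erase v, |x j| ≤ ∏ _j ∈ f.erase v, M :=
            Finset.prod_le_prod (fun j _ => abs_nonneg _) (fun j _ => hM j)
        _ = M ^ (k - 1) := by rw [Finset.prod_const, hcard f hf]
    -- sum of abs equals the bound
    have h1 : (hdeg E v : ℝ) * M ^ (k - 1) ≤ ∑ f ∈ F, ∏ j ∈ f.erase v, |x j| := by
      have : (hdeg E v : ℝ) * x v ^ (k - 1) = -∑ f ∈ F, ∏ j ∈ f.erase v, x j := by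
        linarith [heq]
      calc (hdeg E v : ℝ) * M ^ (k - 1)
          = |(hdeg E v : ℝ) * x v ^ (k - 1)| := by
            rw [abs_mul, abs_pow, hv, abs_of_nonneg (by positivity : (0:ℝ) ≤ (hdeg E v : ℝ))]
        _ = |∑ f ∈ F, ∏ j ∈ f.erase v, x j| := by rw [this, abs_neg]
        _ ≤ ∑ f ∈ F, |∏ j ∈ f.erase v, x j| := Finset.abs_sum_le_sum_abs _ _
        _ = ∑ f ∈ F, ∏ j ∈ f.erase v, |x j| := by
            refine Finset.sum_congr rfl fun f _ => ?_
            exact Finset.abs_prod _ _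
    have h2 : ∑ f ∈ F, ∏ j ∈ f.erase v, |x j| ≤ (hdeg E v : ℝ) * M ^ (k - 1) := by
      calc ∑ f ∈ F, ∏ j ∈ f.erase v, |x j| ≤ ∑ _f ∈ F, M ^ (k - 1) :=
            Finset.sum_le_sum hle
        _ = (hdeg E v : ℝ) * M ^ (k - 1) := by
            rw [Finset.sum_const, hdeg, nsmul_eq_mul]
    have hsum : ∑ f ∈ F, ∏ j ∈ f.erase v, |x j| = ∑ _f ∈ F, M ^ (k - 1) := by
      have := le_antisymm h2 h1
      rw [this, Finset.sum_const, hdeg, nsmul_eq_mul]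
    -- each edge term is exactly M^(k-1)
    have hedge : ∏ j ∈ e.erase v, |x j| = M ^ (k - 1) := by
      by_contra hne'
      have hlt : ∏ j ∈ e.erase v, |x j| < M ^ (k - 1) :=
        lt_of_le_of_ne (hle e heF) hne'
      have := Finset.sum_lt_sum hle ⟨e, heF, hlt⟩
      rw [hsum] at this
      exact lt_irrefl _ this
    -- every factor is M
    have hpos : ∀ u ∈ e.erase v, 0 < |x u| := by
      intro u hu
      by_contra h
      push_neg at h
      have h0 : |x u| = 0 := le_antisymm h (abs_nonneg _)
      have : ∏ j ∈ e.erase v, |x j| = 0 := Finset.prod_eq_zero hu h0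
      rw [hedge] at this
      exact absurd this (by positivity)
    have hjM : |x j| = M := by
      by_contra hne'
      have hlt : |x j| < M := lt_of_le_of_ne (hM j) hne'
      have hje : j ∈ e.erase v := Finset.mem_erase.mpr ⟨hjv, hj⟩
      have : ∏ u ∈ e.erase v, |x u| < ∏ _u ∈ e.erase v, M :=
        Finset.prod_lt_prod hpos (fun u _ => hM u) ⟨j, hje, hlt⟩
      rw [hedge, Finset.prod_const, Finset.card_erase_of_mem hve, hE e he] at this
      exact lt_irrefl _ this
    exact hjM
  have hall : ∀ i, |x i| = M := by
    intro j
    rcases eq_or_ne j i0 with rfl | hji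
    · rfl
    obtain ⟨m, es, hmem, h0, hlast, hint⟩ := hconn i0 j (Ne.symm hji)
    have hchain : ∀ r : Fin (m + 1), ∀ u ∈ es r, |x u| = M := by
      intro r
      induction r using Fin.induction with
      | zero => exact fun u hu => key i0 rfl (es 0) (hmem 0) h0 u hu
      | succ r ih =>
        obtain ⟨w, hw⟩ := hint r
        rw [Finset.mem_inter] at hw
        exact fun u hu => key w (ih w hw.1) (es r.succ) (hmem r.succ) hw.2 u hu
    exact hchain (Fin.last m) j hlast
  refine ⟨M, ne_of_gt hMpos, fun i => ?_⟩
  rcases abs_eq (le_of_lt hMpos) |>.mp (hall i) with h | h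
  · exact Or.inl h
  · exact Or.inr h
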